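/- Define matrices A_n ∈ ℝ^{2^n × 2^n} recursively by A_0 = (1) and A_{n+1} = [[A_n, Id_{2^n}],[A_n, -Id_{2^n}]] (block form). Then for every n ≥ 0 and every x ∈ {-1,1}^{2^n}, ‖A_n x‖_∞ = n+1. -/
import Mathlib
open Matrix Finset

/-- The ±1 vector associated to a Boolean sign pattern. -/
noncomputable def signVec {n : ℕ} (σ : Fin n → Bool) : Fin n → ℝ :=
  fun i => if σ i then 1 else -1

/-- The ℓ^∞ norm (maximum absolute coordinate) of a vector. -/
noncomputable def supNorm {n : ℕ} (v : Fin n → ℝ) : ℝ := ⨆ i, |v i|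

/-- β(A) = 2^{-n} Σ_{x ∈ {-1,1}^n} ‖Ax‖_∞. -/
noncomputable def beta {n : ℕ} (A : Matrix (Fin n) (Fin n) ℝ) : ℝ :=
  (2 ^ n : ℝ)⁻¹ * ∑ σ : Fin n → Bool, supNorm (A.mulVec (signVec σ))

/-- The recursively defined Haar-type matrices: A₀ = (1),
A_{n+1} = [[Aₙ, Id],[Aₙ, -Id]]. -/
noncomputable def haarA : (n : ℕ) → Matrix (Fin (2 ^ n)) (Fin (2 ^ n)) ℝ
  | 0 => 1
  | n + 1 =>
      Matrix.reindex (finSumFinEquiv.trans (finCongr (by rw [pow_succ, mul_two])))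
        (finSumFinEquiv.trans (finCongr (by rw [pow_succ, mul_two])))
        (Matrix.fromBlocks (haarA n) 1 (haarA n) (-1))

lemma ciSup_sum' {ι κ : Type*} [Fintype ι] [Fintype κ] [Nonempty ι] [Nonempty κ]
    (f : ι ⊕ κ → ℝ) : ⨆ s, f s = (⨆ i, f (.inl i)) ⊔ ⨆ j, f (.inr j) := by
  rw [← Finset.sup'_univ_eq_ciSup, ← Finset.sup'_univ_eq_ciSup, ← Finset.sup'_univ_eq_ciSup]
  apply le_antisymm
  · exact Finset.sup'_le _ _ fun s _ => by
      cases s with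
      | inl i => exact le_sup_of_le_left (Finset.le_sup' (fun i => f (Sum.inl i)) (mem_univ i))
      | inr j => exact le_sup_of_le_right (Finset.le_sup' (fun j => f (Sum.inr j)) (mem_univ j))
  · exact sup_le (Finset.sup'_le _ _ fun i _ => Finset.le_sup' f (mem_univ (Sum.inl i)))
      (Finset.sup'_le _ _ fun j _ => Finset.le_sup' f (mem_univ (Sum.inr j)))

lemma ciSup_sup' {ι : Type*} [Fintype ι] [Nonempty ι] (f g : ι → ℝ) :
    (⨆ i, f i) ⊔ (⨆ i, g i) = ⨆ i, (f i ⊔ g i) := by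
  rw [← Finset.sup'_univ_eq_ciSup, ← Finset.sup'_univ_eq_ciSup, ← Finset.sup'_univ_eq_ciSup]
  apply le_antisymm
  · exact sup_le
      (Finset.sup'_le _ _ fun i _ =>
        le_trans le_sup_left (Finset.le_sup' (fun i => f i ⊔ g i) (mem_univ i)))
      (Finset.sup'_le _ _ fun i _ =>
        le_trans le_sup_right (Finset.le_sup' (fun i => f i ⊔ g i) (mem_univ i)))
  · exact Finset.sup'_le _ _ fun i _ =>
      sup_le (le_sup_of_le_left (Finset.le_sup' f (mem_univ i)))
        (le_sup_of_le_right (Finset.le_sup' g (mem_univ i)))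

lemma ciSup_add_const {ι : Type*} [Fintype ι] [Nonempty ι] (f : ι → ℝ) (c : ℝ) :
    ⨆ i, (f i + c) = (⨆ i, f i) + c := by
  rw [← Finset.sup'_univ_eq_ciSup, ← Finset.sup'_univ_eq_ciSup, Finset.sup'_add]

lemma max_abs_pm (a : ℝ) : |a + 1| ⊔ |a - 1| = |a| + 1 := by
  rcases le_total 0 a with h | h
  · have h1 : |a + 1| = a + 1 := abs_of_nonneg (by linarith)
    have h2 : |a - 1| ≤ a + 1 := abs_le.2 ⟨by linarith, by linarith⟩
    rw [abs_of_nonneg h, h1]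
    exact sup_eq_left.2 h2
  · have h1 : |a - 1| = -(a - 1) := abs_of_nonpos (by linarith)
    have h2 : |a + 1| ≤ -(a - 1) := abs_le.2 ⟨by linarith, by linarith⟩
    rw [abs_of_nonpos h, h1, sup_eq_right.2 (h1 ▸ h2)]
    ring

theorem haarA_supNorm (n : ℕ) (σ : Fin (2 ^ n) → Bool) :
    supNorm ((haarA n).mulVec (signVec σ)) = n + 1 := by
  induction n with
  | zero =>
    have : ∀ i : Fin (2 ^ 0), |((haarA 0).mulVec (signVec σ)) i| = 1 := by
      intro i
      rw [haarA, Matrix.one_mulVec, signVec]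
      rcases σ i with _ | _ <;> simp
    simp [supNorm, this]
  | succ n ih =>
    set e : Fin (2 ^ n) ⊕ Fin (2 ^ n) ≃ Fin (2 ^ (n + 1)) :=
      finSumFinEquiv.trans (finCongr (by rw [pow_succ, mul_two]))
    rw [haarA]
    rw [Matrix.reindex_apply, Matrix.submatrix_mulVec_equiv]
    have hsurj : Function.Surjective (e.symm : Fin (2 ^ (n+1)) → Fin (2 ^ n) ⊕ Fin (2 ^ n)) :=
      e.symm.surjective
    rw [supNorm]
    set M := Matrix.fromBlocks (haarA n) 1 (haarA n) (-(1 : Matrix (Fin (2^n)) (Fin (2^n)) ℝ)) with hM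
    set u : Fin (2 ^ n) ⊕ Fin (2 ^ n) → ℝ := signVec σ ∘ (e.symm).symm with hu
    have key : (⨆ j, |((M *ᵥ u) ∘ e.symm) j|) = ⨆ s, |(M *ᵥ u) s| :=
      hsurj.iSup_comp (g := fun s => |(M *ᵥ u) s|)
    rw [key]
    rw [Matrix.fromBlocks_mulVec, Matrix.one_mulVec, Matrix.neg_mulVec, Matrix.one_mulVec]
    set F : Fin (2 ^ n) → ℝ := (haarA n) *ᵥ ((signVec σ ∘ (e.symm).symm) ∘ Sum.inl)
    set z : Fin (2 ^ n) → ℝ := (signVec σ ∘ (e.symm).symm) ∘ Sum.inr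
    rw [ciSup_sum']
    simp only [Sum.elim_inl, Sum.elim_inr, Pi.add_apply, Pi.neg_apply]
    rw [ciSup_sup']
    have hz : ∀ i, z i = 1 ∨ z i = -1 := by
      intro i
      simp only [z, Function.comp_apply, signVec]
      split <;> simp
    have : ∀ i, |F i + z i| ⊔ |F i + -z i| = |F i| + 1 := by
      intro i
      rcases hz i with h | h <;> rw [h]
      · rw [show F i + -(1:ℝ) = F i - 1 by ring]; exact max_abs_pm (F i)
      · rw [show F i + -(1:ℝ) = F i - 1 by ring, show F i + -(-1:ℝ) = F i + 1 by ring,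
          sup_comm]
        exact max_abs_pm (F i)
    simp only [this]
    rw [ciSup_add_const]
    have h2 : (⨆ i, |F i|) = (n : ℝ) + 1 := ih (fun i => σ (e.symm.symm (Sum.inl i)))
    rw [h2]
    push_cast
    ring
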